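/- Let A be an n×d real matrix and C be an n×d matrix whose i-th row is the mean of the rows of A belonging to the cluster containing row i. For any subset S of the rows of a cluster T_r, the Euclidean distance between the mean of the rows in S and the mean of the rows in T_r is at most ‖A−C‖_op / √|S|, where ‖·‖_op denotes the spectral (operator) norm. -/

import Mathlib

open Matrix

/-- The ℓ2 (spectral) operator norm of a matrix. -/
noncomputable def opNorm {n d : ℕ} (M : Matrix (Fin n) (Fin d) ℝ) : ℝ :=
  ‖LinearMap.toContinuousLinearMap (Matrix.toEuclideanLin M)‖

/-- Mean of the rows of `A` indexed by `S`, as a point of Euclidean space. -/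
noncomputable def clMean {n d : ℕ} (A : Matrix (Fin n) (Fin d) ℝ) (S : Finset (Fin n)) :
    EuclideanSpace ℝ (Fin d) :=
  (S.card : ℝ)⁻¹ • ∑ i ∈ S, (WithLp.equiv 2 (Fin d → ℝ)).symm (A i)

/-- The cluster (as a `Finset`) of label `r` under the cluster assignment `c`. -/
def cluster {n k : ℕ} (c : Fin n → Fin k) (r : Fin k) : Finset (Fin n) :=
  Finset.univ.filter (fun j => c j = r)

/-- The spectral norm is invariant under transposition. -/
lemma opNorm_transpose {n d : ℕ} (M : Matrix (Fin n) (Fin d) ℝ) :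
    opNorm Mᵀ = opNorm M := by
  unfold opNorm
  have h : Mᵀ = Mᴴ := by
    ext i j; simp [Matrix.conjTranspose_apply]
  rw [h, Matrix.toEuclideanLin_conjTranspose_eq_adjoint,
    LinearMap.adjoint_toContinuousLinearMap]
  exact (ContinuousLinearMap.adjoint :
    (EuclideanSpace ℝ (Fin d) →L[ℝ] EuclideanSpace ℝ (Fin n)) ≃ₗᵢ⋆[ℝ] _).norm_map _

/-- Applying `Mᵀ` to the indicator vector of `S` sums the rows of `M` over `S`. -/
lemma transpose_indicator {n d : ℕ} (M : Matrix (Fin n) (Fin d) ℝ) (S : Finset (Fin n)) :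
    Matrix.toEuclideanLin Mᵀ
      ((WithLp.equiv 2 (Fin n → ℝ)).symm (fun i => if i ∈ S then (1:ℝ) else 0)) =
    ∑ i ∈ S, (WithLp.equiv 2 (Fin d → ℝ)).symm (M i) := by
  rw [show ∀ v : Fin n → ℝ, Matrix.toEuclideanLin Mᵀ ((WithLp.equiv 2 (Fin n → ℝ)).symm v) =
      (WithLp.equiv 2 (Fin d → ℝ)).symm (Mᵀ *ᵥ v) from fun v => rfl, Equiv.symm_apply_eq]
  funext j
  have : (∑ i ∈ S, (WithLp.equiv 2 (Fin d → ℝ)).symm (M i)) j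
      = ∑ i ∈ S, ((WithLp.equiv 2 (Fin d → ℝ)).symm (M i)) j :=
    map_sum (EuclideanSpace.proj j) _ _
  simp [this, Matrix.mulVec, dotProduct, Matrix.transpose_apply, ite_mul,
    Finset.sum_ite_mem]
  exact (Finset.sum_apply j S (fun i => M i)).symm

theorem mean_shift {n d k : ℕ} (A C : Matrix (Fin n) (Fin d) ℝ) (c : Fin n → Fin k)
    (hC : ∀ i, (WithLp.equiv 2 (Fin d → ℝ)).symm (C i) = clMean A (cluster c (c i)))
    (r : Fin k) (S : Finset (Fin n)) (hS : S ⊆ cluster c r) (hne : S.Nonempty) :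
    ‖clMean A S - clMean A (cluster c r)‖ ≤ opNorm (A - C) / Real.sqrt S.card := by
  set T := cluster c r with hT
  set μ := clMean A T with hμ
  have hcard : (0 : ℝ) < S.card := by exact_mod_cast Finset.card_pos.mpr hne
  have hrow : ∀ i ∈ S, (WithLp.equiv 2 (Fin d → ℝ)).symm (C i) = μ := by
    intro i hi
    have hcr : c i = r := by
      have := hS hi
      simpa [hT, cluster] using this
    rw [hC i, hcr]
  set u : EuclideanSpace ℝ (Fin n) :=
    (WithLp.equiv 2 (Fin n → ℝ)).symm (fun i => if i ∈ S then (1 : ℝ) else 0) with hu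
  have hnormu : ‖u‖ = Real.sqrt S.card := by
    rw [EuclideanSpace.norm_eq]
    congr 1
    have h1 : ∀ i : Fin n, ‖u i‖ ^ 2 = if i ∈ S then (1:ℝ) else 0 := by
      intro i
      by_cases hi : i ∈ S <;> simp [hu, hi]
    rw [Finset.sum_congr rfl fun i _ => h1 i]
    simp
  -- key algebraic identity
  have hkey : clMean A S - μ = (S.card : ℝ)⁻¹ • Matrix.toEuclideanLin (A - C)ᵀ u := by
    rw [hu, transpose_indicator]
    have hsum : ∑ i ∈ S, (WithLp.equiv 2 (Fin d → ℝ)).symm ((A - C) i)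
        = (∑ i ∈ S, (WithLp.equiv 2 (Fin d → ℝ)).symm (A i)) - (S.card : ℕ) • μ := by
      have : ∀ i ∈ S, (WithLp.equiv 2 (Fin d → ℝ)).symm ((A - C) i)
          = (WithLp.equiv 2 (Fin d → ℝ)).symm (A i) - μ := by
        intro i hi
        rw [show (A - C) i = A i - C i from rfl, show (WithLp.equiv 2 (Fin d → ℝ)).symm (A i - C i) = (WithLp.equiv 2 (Fin d → ℝ)).symm (A i) -
          (WithLp.equiv 2 (Fin d → ℝ)).symm (C i) from rfl, hrow i hi]
      rw [Finset.sum_congr rfl this, Finset.sum_sub_distrib, Finset.sum_const]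
    rw [hsum, smul_sub, ← Nat.cast_smul_eq_nsmul ℝ, smul_smul,
      inv_mul_cancel₀ (ne_of_gt hcard), one_smul]
    rfl
  have hbound : ‖Matrix.toEuclideanLin (A - C)ᵀ u‖ ≤ opNorm (A - C) * Real.sqrt S.card := by
    have := (LinearMap.toContinuousLinearMap (Matrix.toEuclideanLin (A - C)ᵀ)).le_opNorm u
    rw [hnormu] at this
    calc ‖Matrix.toEuclideanLin (A - C)ᵀ u‖
        ≤ opNorm ((A - C)ᵀ) * Real.sqrt S.card := this
      _ = opNorm (A - C) * Real.sqrt S.card := by rw [opNorm_transpose]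
  have hsqrt : (0 : ℝ) < Real.sqrt S.card := Real.sqrt_pos.mpr hcard
  rw [hkey, norm_smul]
  have hs : ‖((S.card : ℝ)⁻¹)‖ = (S.card : ℝ)⁻¹ := by
    rw [Real.norm_eq_abs, abs_of_pos (inv_pos.mpr hcard)]
  rw [hs]
  rw [div_eq_mul_inv]
  calc (S.card : ℝ)⁻¹ * ‖Matrix.toEuclideanLin (A - C)ᵀ u‖
      ≤ (S.card : ℝ)⁻¹ * (opNorm (A - C) * Real.sqrt S.card) := by
        apply mul_le_mul_of_nonneg_left hbound (le_of_lt (inv_pos.mpr hcard))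
    _ = opNorm (A - C) * ((S.card : ℝ)⁻¹ * Real.sqrt S.card) := by ring
    _ = opNorm (A - C) * (Real.sqrt S.card)⁻¹ := by
        congr 1
        rw [← Real.sqrt_mul_self (le_of_lt hcard)] -- s = √s * √s
        field_simp
        rw [Real.sq_sqrt (Real.sqrt_nonneg _)]
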